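/- The natural transformation μ• on the full capacity functor M fails associativity: there exists a two-point discrete space X = {a,b} and ℷ ∈ M(M(MX)) such that μ•X ∘ M(μ•X)(ℷ)({a}) ≥ 1/2 while μ•X ∘ μ•(MX)(ℷ)({a}) = 1/4. Concretely, with 𝔄₁(α) = 1 iff α ⊇ {a}_{1/2} (else 0), 𝔄₂(α) = 1 iff α = MX, = 1/2 iff α ⊇ {a}_1 (else 0), and ℷ(Λ) = (1/2)η(𝔄₁)(Λ) + (1/2)η(𝔄₂)(Λ), the two iterated multiplications disagree on {a}. -/

import Mathlib

open Set TopologicalSpace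
open scoped Classical

/-- An upper-semicontinuous capacity on a topological space `X`:
a monotone set function on closed sets with values in `[0,1]`,
`ν ∅ = 0`, `ν X = 1`, and upper semicontinuity. -/
structure Capacity (X : Type*) [TopologicalSpace X] where
  toFun : Set X → ℝ
  nonneg : ∀ A : Set X, 0 ≤ toFun A
  le_one : ∀ A : Set X, toFun A ≤ 1
  empty' : toFun ∅ = 0
  univ' : toFun Set.univ = 1
  mono : ∀ ⦃A B : Set X⦄, IsClosed A → IsClosed B → A ⊆ B → toFun A ≤ toFun B
  usc : ∀ ⦃F : Set X⦄ ⦃a : ℝ⦄, IsClosed F → toFun F < a →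
    ∃ U : Set X, IsOpen U ∧ F ⊆ U ∧ ∀ ⦃K : Set X⦄, IsCompact K → K ⊆ U → toFun K < a

/-- `ν` is a possibility capacity: `ν (A ∪ B) = max (ν A) (ν B)` for closed `A`, `B`. -/
def IsPossibility {X : Type*} [TopologicalSpace X] (ν : Capacity X) : Prop :=
  ∀ ⦃A B : Set X⦄, IsClosed A → IsClosed B →
    ν.toFun (A ∪ B) = max (ν.toFun A) (ν.toFun B)


noncomputable def capExt {X : Type*} [TopologicalSpace X] (m : Set X → ℝ) (U : Set X) : ℝ :=
  sSup (m '' {K : Set X | IsClosed K ∧ K ⊆ U})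

/-- The topology on the space of all capacities, generated by the subbase
of sets of capacities small on a given closed set or large on a given open set. -/
instance instTopCap (X : Type*) [TopologicalSpace X] : TopologicalSpace (Capacity X) :=
  TopologicalSpace.generateFrom
    ({S | ∃ (F : Set X) (a : ℝ), IsClosed F ∧ S = {c : Capacity X | c.toFun F < a}} ∪
     {S | ∃ (U : Set X) (a : ℝ), IsOpen U ∧ S = {c : Capacity X | a < capExt c.toFun U}})

/-- The max-product multiplication for arbitrary capacities of second order. -/
noncomputable def muStarM {X : Type*} [TopologicalSpace X]
    (A : Capacity (Capacity X)) (F : Set X) : ℝ :=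
  sSup ((fun t => A.toFun {c : Capacity X | t ≤ c.toFun F} * t) '' Set.Ioc (0:ℝ) 1)

-- basic open sets
lemma capOpen_lt {X : Type*} [TopologicalSpace X] {F : Set X} (hF : IsClosed F) (a : ℝ) :
    IsOpen {c : Capacity X | c.toFun F < a} :=
  TopologicalSpace.isOpen_generateFrom_of_mem (Or.inl ⟨F, a, hF, rfl⟩)

lemma capOpen_gt {X : Type*} [TopologicalSpace X] {U : Set X} (hU : IsOpen U) (a : ℝ) :
    IsOpen {c : Capacity X | a < capExt c.toFun U} :=
  TopologicalSpace.isOpen_generateFrom_of_mem (Or.inr ⟨U, a, hU, rfl⟩)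

lemma cap_eq {X : Type*} [TopologicalSpace X] {c d : Capacity X}
    (h : c.toFun = d.toFun) : c = d := by
  cases c; cases d; simp_all

lemma setBool (α : Set Bool) :
    α = ∅ ∨ α = {true} ∨ α = {false} ∨ α = Set.univ := by
  by_cases ht : true ∈ α <;> by_cases hf : false ∈ α
  · right; right; right; ext x; cases x <;> simp [ht, hf]
  · right; left; ext x; cases x <;> simp [ht, hf]
  · right; right; left; ext x; cases x <;> simp [ht, hf]
  · left; ext x; cases x <;> simp [ht, hf]

/-- capacity on Bool with value p on {true}, 0 on {false} -/
noncomputable def pcap (p : ℝ) (h0 : 0 ≤ p) (h1 : p ≤ 1) : Capacity Bool where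
  toFun α := if true ∈ α then (if false ∈ α then 1 else p) else 0
  nonneg A := by split_ifs <;> linarith
  le_one A := by split_ifs <;> linarith
  empty' := by simp
  univ' := by simp
  mono A B _ _ hAB := by
    by_cases ht : true ∈ A
    · have htB := hAB ht
      by_cases hf : false ∈ A
      · simp [ht, hf, htB, hAB hf]
      · simp only [ht, htB, if_true]
        split_ifs <;> linarith
    · simp only [ht, if_false]
      split_ifs <;> linarith
  usc F a _ hFa := by
    refine ⟨F, isOpen_discrete F, subset_rfl, fun K _ hK => lt_of_le_of_lt ?_ hFa⟩
    by_cases ht : true ∈ K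
    · have htB := hK ht
      by_cases hf : false ∈ K
      · simp [ht, hf, htB, hK hf]
      · simp only [ht, htB, if_true]
        split_ifs <;> linarith
    · simp only [ht, if_false]
      split_ifs <;> linarith

lemma pcap_true (p : ℝ) (h0 : 0 ≤ p) (h1 : p ≤ 1) :
    (pcap p h0 h1).toFun {true} = p := by simp [pcap]

lemma capExt_bool (c : Capacity Bool) (U : Set Bool) : capExt c.toFun U = c.toFun U := by
  apply le_antisymm
  · have hne0 : ({K : Set Bool | IsClosed K ∧ K ⊆ U}).Nonempty :=
      ⟨∅, isClosed_discrete _, empty_subset _⟩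
    refine csSup_le (hne0.image c.toFun) ?_
    rintro y ⟨K, ⟨_, hKU⟩, rfl⟩
    exact c.mono (isClosed_discrete _) (isClosed_discrete _) hKU
  · exact le_csSup ⟨1, by rintro y ⟨K, _, rfl⟩; exact c.le_one K⟩
      ⟨U, ⟨isClosed_discrete _, subset_rfl⟩, rfl⟩

lemma singleton_closed (c : Capacity Bool) : IsClosed {c} := by
  constructor
  have : {c}ᶜ = {B : Capacity Bool | B.toFun {true} < c.toFun {true}} ∪
      {B : Capacity Bool | c.toFun {true} < capExt B.toFun {true}} ∪
      ({B : Capacity Bool | B.toFun {false} < c.toFun {false}} ∪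
      {B : Capacity Bool | c.toFun {false} < capExt B.toFun {false}}) := by
    ext B
    simp only [mem_compl_iff, mem_singleton_iff, mem_union, mem_setOf_eq, capExt_bool]
    constructor
    · intro hne
      by_contra h
      push_neg at h
      obtain ⟨⟨h1, h2⟩, h3, h4⟩ := h
      apply hne
      apply cap_eq
      funext α
      have et : B.toFun {true} = c.toFun {true} := le_antisymm h2 h1
      have ef : B.toFun {false} = c.toFun {false} := le_antisymm h4 h3
      rcases setBool α with rfl | rfl | rfl | rfl
      · rw [B.empty', c.empty']
      · exact et
      · exact ef
      · rw [B.univ', c.univ']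
    · rintro (((h | h) | (h | h))) rfl <;> exact lt_irrefl _ h
  rw [this]
  exact ((capOpen_lt (isClosed_discrete _) _).union (capOpen_gt (isOpen_discrete _) _)).union
    ((capOpen_lt (isClosed_discrete _) _).union (capOpen_gt (isOpen_discrete _) _))

noncomputable def S1 : Set (Capacity Bool) := {c | (1:ℝ)/2 ≤ c.toFun {true}}
noncomputable def S2 : Set (Capacity Bool) := {c | (1:ℝ) ≤ c.toFun {true}}

lemma S1_closed : IsClosed S1 := by
  have h : S1ᶜ = {c : Capacity Bool | c.toFun {true} < 1/2} := by
    ext c; simp [S1, not_le]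
  rw [← isOpen_compl_iff, h]; exact capOpen_lt (isClosed_discrete _) _

lemma S2_closed : IsClosed S2 := by
  have h : S2ᶜ = {c : Capacity Bool | c.toFun {true} < 1} := by
    ext c; simp [S2, not_le]
  rw [← isOpen_compl_iff, h]; exact capOpen_lt (isClosed_discrete _) _

lemma pcap1_mem_S1 : pcap 1 zero_le_one le_rfl ∈ S1 := by
  simp [S1, pcap_true]; norm_num

lemma pcap1_mem_S2 : pcap 1 zero_le_one le_rfl ∈ S2 := by
  simp [S2, pcap_true]

lemma pcap0_not_mem_S2 : pcap 0 le_rfl zero_le_one ∉ S2 := by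
  simp [S2, pcap_true]

lemma S2_ne_univ : S2 ≠ Set.univ := fun h => pcap0_not_mem_S2 (h ▸ mem_univ _)

lemma not_S1_empty : ¬ S1 ⊆ (∅ : Set (Capacity Bool)) :=
  fun h => (h pcap1_mem_S1).elim

lemma not_S2_empty : ¬ S2 ⊆ (∅ : Set (Capacity Bool)) :=
  fun h => (h pcap1_mem_S2).elim

noncomputable def A1c : Capacity (Capacity Bool) where
  toFun α := if S1 ⊆ α then 1 else 0
  nonneg α := by split_ifs <;> norm_num
  le_one α := by split_ifs <;> norm_num
  empty' := by rw [if_neg not_S1_empty]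
  univ' := if_pos (subset_univ _)
  mono A B _ _ hAB := by
    split_ifs with h1 h2
    · exact le_refl 1
    · exact absurd (h1.trans hAB) h2
    · norm_num
    · exact le_refl 0
  usc F a _ hFa := by
    have h00 : (0:ℝ) ≤ if S1 ⊆ F then 1 else 0 := by split_ifs <;> norm_num
    have ha0 : 0 < a := lt_of_le_of_lt h00 hFa
    rcases lt_or_ge 1 a with h | ha
    · exact ⟨Set.univ, isOpen_univ, subset_univ _,
        fun K _ _ => by split_ifs <;> linarith⟩
    · have h0 : ¬ S1 ⊆ F := by
        intro hs; rw [if_pos hs] at hFa; linarith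
      obtain ⟨c, hc1, hc2⟩ := not_subset.mp h0
      refine ⟨{c}ᶜ, (singleton_closed c).isOpen_compl, ?_, ?_⟩
      · intro y hy
        simp only [mem_compl_iff, mem_singleton_iff]
        rintro rfl; exact hc2 hy
      · intro K _ hK
        have : ¬ S1 ⊆ K := fun hs => (hK (hs hc1)) rfl
        rw [if_neg this]; exact ha0

noncomputable def A2c : Capacity (Capacity Bool) where
  toFun α := if α = Set.univ then 1 else if S2 ⊆ α then 1/2 else 0
  nonneg α := by split_ifs <;> norm_num
  le_one α := by split_ifs <;> norm_num
  empty' := by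
    rw [if_neg, if_neg not_S2_empty]
    exact fun h => not_S2_empty (h ▸ subset_univ S2)
  univ' := if_pos rfl
  mono A B _ _ hAB := by
    by_cases h1 : A = Set.univ
    · have h2 : B = Set.univ := univ_subset_iff.mp (h1 ▸ hAB)
      simp [h1, h2]
    · rw [if_neg h1]
      by_cases h3 : S2 ⊆ A
      · rw [if_pos h3]
        split_ifs with h4 h5
        · norm_num
        · norm_num
        · exact absurd (h3.trans hAB) h5
      · rw [if_neg h3]
        split_ifs <;> norm_num
  usc F a _ hFa := by
    have h00 : (0:ℝ) ≤ if F = Set.univ then 1 else if S2 ⊆ F then 1/2 else 0 := by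
      split_ifs <;> norm_num
    have ha0 : 0 < a := lt_of_le_of_lt h00 hFa
    rcases lt_or_ge 1 a with h | ha
    · exact ⟨Set.univ, isOpen_univ, subset_univ _,
        fun K _ _ => by split_ifs <;> linarith⟩
    · have hFu : F ≠ Set.univ := by
        intro hs; rw [if_pos hs] at hFa; linarith
      rcases lt_or_ge (1/2 : ℝ) a with h2 | h2
      · obtain ⟨c, hc⟩ := (ne_univ_iff_exists_notMem F).mp hFu
        refine ⟨{c}ᶜ, (singleton_closed c).isOpen_compl, ?_, ?_⟩
        · intro y hy
          simp only [mem_compl_iff, mem_singleton_iff]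
          rintro rfl; exact hc hy
        · intro K _ hK
          have hKu : K ≠ Set.univ := by
            rintro rfl; exact (hK (mem_univ c)) rfl
          rw [if_neg hKu]; split_ifs <;> linarith
      · have hS2 : ¬ S2 ⊆ F := by
          intro hs; rw [if_neg hFu, if_pos hs] at hFa; linarith
        obtain ⟨c, hc1, hc2⟩ := not_subset.mp hS2
        refine ⟨{c}ᶜ, (singleton_closed c).isOpen_compl, ?_, ?_⟩
        · intro y hy
          simp only [mem_compl_iff, mem_singleton_iff]
          rintro rfl; exact hc2 hy
        · intro K _ hK
          have hKu : K ≠ Set.univ := by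
            rintro rfl; exact (hK (mem_univ c)) rfl
          have : ¬ S2 ⊆ K := fun hs => (hK (hs hc1)) rfl
          rw [if_neg hKu, if_neg this]; exact ha0

lemma bddAbove_capimg {X : Type*} [TopologicalSpace X] (c : Capacity X) (S : Set (Set X)) :
    BddAbove (c.toFun '' S) :=
  ⟨1, by rintro y ⟨K, _, rfl⟩; exact c.le_one K⟩

lemma capimg_ne {X : Type*} [TopologicalSpace X] (c : Capacity X) (U : Set X) :
    (c.toFun '' {K : Set X | IsClosed K ∧ K ⊆ U}).Nonempty :=
  ⟨c.toFun ∅, ⟨∅, ⟨isClosed_empty, empty_subset _⟩, rfl⟩⟩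

lemma le_capExt {X : Type*} [TopologicalSpace X] (c : Capacity X) {K U : Set X}
    (hK : IsClosed K) (hKU : K ⊆ U) : c.toFun K ≤ capExt c.toFun U :=
  le_csSup (bddAbove_capimg c _) ⟨K, ⟨hK, hKU⟩, rfl⟩

lemma capExt_A1 (V : Set (Capacity Bool)) :
    capExt A1c.toFun V = if S1 ⊆ V then 1 else 0 := by
  split_ifs with h
  · apply le_antisymm
    · exact csSup_le (capimg_ne _ _) (by rintro y ⟨K, _, rfl⟩; exact A1c.le_one K)
    · have : A1c.toFun S1 = 1 := by
        show (if S1 ⊆ S1 then (1:ℝ) else 0) = 1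
        rw [if_pos subset_rfl]
      calc (1:ℝ) = A1c.toFun S1 := this.symm
        _ ≤ _ := le_capExt _ S1_closed h
  · apply le_antisymm
    · refine csSup_le (capimg_ne _ _) ?_
      rintro y ⟨K, ⟨_, hKV⟩, rfl⟩
      have : ¬ S1 ⊆ K := fun hs => h (hs.trans hKV)
      show (if S1 ⊆ K then (1:ℝ) else 0) ≤ 0
      rw [if_neg this]
    · calc (0:ℝ) = A1c.toFun ∅ := A1c.empty'.symm
        _ ≤ _ := le_capExt _ isClosed_empty (empty_subset _)

lemma A2_S2 : A2c.toFun S2 = 1/2 := by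
  show (if S2 = Set.univ then (1:ℝ) else if S2 ⊆ S2 then 1/2 else 0) = 1/2
  rw [if_neg S2_ne_univ, if_pos subset_rfl]

lemma capExt_A2 (V : Set (Capacity Bool)) :
    capExt A2c.toFun V = if V = Set.univ then 1 else if S2 ⊆ V then 1/2 else 0 := by
  split_ifs with h h2
  · subst h
    apply le_antisymm
    · exact csSup_le (capimg_ne _ _) (by rintro y ⟨K, _, rfl⟩; exact A2c.le_one K)
    · calc (1:ℝ) = A2c.toFun Set.univ := A2c.univ'.symm
        _ ≤ _ := le_capExt _ isClosed_univ subset_rfl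
  · apply le_antisymm
    · refine csSup_le (capimg_ne _ _) ?_
      rintro y ⟨K, ⟨_, hKV⟩, rfl⟩
      have hKu : K ≠ Set.univ := fun hs => h (univ_subset_iff.mp (hs ▸ hKV))
      show (if K = Set.univ then (1:ℝ) else if S2 ⊆ K then 1/2 else 0) ≤ 1/2
      rw [if_neg hKu]; split_ifs <;> norm_num
    · calc (1/2:ℝ) = A2c.toFun S2 := A2_S2.symm
        _ ≤ _ := le_capExt _ S2_closed h2
  · apply le_antisymm
    · refine csSup_le (capimg_ne _ _) ?_
      rintro y ⟨K, ⟨_, hKV⟩, rfl⟩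
      have hKu : K ≠ Set.univ := fun hs => h (univ_subset_iff.mp (hs ▸ hKV))
      have hs2 : ¬ S2 ⊆ K := fun hs => h2 (hs.trans hKV)
      show (if K = Set.univ then (1:ℝ) else if S2 ⊆ K then 1/2 else 0) ≤ 0
      rw [if_neg hKu, if_neg hs2]
    · calc (0:ℝ) = A2c.toFun ∅ := A2c.empty'.symm
        _ ≤ _ := le_capExt _ isClosed_empty (empty_subset _)

lemma indist1 (B : Capacity (Capacity Bool))
    (h1 : ∀ α, IsClosed α → A1c.toFun α ≤ B.toFun α)
    (h2 : ∀ V, IsOpen V → capExt B.toFun V ≤ capExt A1c.toFun V) :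
    ∀ α, IsClosed α → B.toFun α = A1c.toFun α := by
  intro α hα
  show B.toFun α = if S1 ⊆ α then 1 else 0
  split_ifs with hs
  · refine le_antisymm (B.le_one α) ?_
    have := h1 α hα
    rwa [show A1c.toFun α = 1 from by show (if S1 ⊆ α then (1:ℝ) else 0) = 1; rw [if_pos hs]] at this
  · obtain ⟨c, hc1, hc2⟩ := not_subset.mp hs
    have hV : IsOpen ({c}ᶜ : Set (Capacity Bool)) := (singleton_closed c).isOpen_compl
    have hαV : α ⊆ {c}ᶜ := by
      intro y hy; simp only [mem_compl_iff, mem_singleton_iff]; rintro rfl; exact hc2 hy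
    have hSV : ¬ S1 ⊆ ({c}ᶜ : Set (Capacity Bool)) := fun hs' => (hs' hc1) rfl
    have hb := (le_capExt B hα hαV).trans ((h2 _ hV).trans_eq (capExt_A1 _))
    rw [if_neg hSV] at hb
    exact le_antisymm hb (B.nonneg α)

lemma indist2 (B : Capacity (Capacity Bool))
    (h1 : ∀ α, IsClosed α → A2c.toFun α ≤ B.toFun α)
    (h2 : ∀ V, IsOpen V → capExt B.toFun V ≤ capExt A2c.toFun V) :
    ∀ α, IsClosed α → B.toFun α = A2c.toFun α := by
  intro α hα
  show B.toFun α = if α = Set.univ then 1 else if S2 ⊆ α then 1/2 else 0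
  split_ifs with hu hs
  · subst hu
    exact le_antisymm (B.le_one _) (by rw [← B.univ'])
  · obtain ⟨c, hc⟩ := (ne_univ_iff_exists_notMem α).mp hu
    have hV : IsOpen ({c}ᶜ : Set (Capacity Bool)) := (singleton_closed c).isOpen_compl
    have hαV : α ⊆ {c}ᶜ := by
      intro y hy; simp only [mem_compl_iff, mem_singleton_iff]; rintro rfl; exact hc hy
    have hVu : ({c}ᶜ : Set (Capacity Bool)) ≠ Set.univ := by
      intro hh
      have : c ∈ ({c}ᶜ : Set (Capacity Bool)) := hh ▸ mem_univ c
      exact this rfl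
    have hb := (le_capExt B hα hαV).trans ((h2 _ hV).trans_eq (capExt_A2 _))
    rw [if_neg hVu, if_pos (hs.trans hαV)] at hb
    refine le_antisymm hb ?_
    have := h1 α hα
    rwa [show A2c.toFun α = 1/2 from by
      show (if α = Set.univ then (1:ℝ) else if S2 ⊆ α then 1/2 else 0) = 1/2
      rw [if_neg hu, if_pos hs]] at this
  · obtain ⟨c, hc1, hc2⟩ := not_subset.mp hs
    have hV : IsOpen ({c}ᶜ : Set (Capacity Bool)) := (singleton_closed c).isOpen_compl
    have hαV : α ⊆ {c}ᶜ := by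
      intro y hy; simp only [mem_compl_iff, mem_singleton_iff]; rintro rfl; exact hc2 hy
    have hVu : ({c}ᶜ : Set (Capacity Bool)) ≠ Set.univ := by
      intro hh
      have : c ∈ ({c}ᶜ : Set (Capacity Bool)) := hh ▸ mem_univ c
      exact this rfl
    have hSV : ¬ S2 ⊆ ({c}ᶜ : Set (Capacity Bool)) := fun hs' => (hs' hc1) rfl
    have hb := (le_capExt B hα hαV).trans ((h2 _ hV).trans_eq (capExt_A2 _))
    rw [if_neg hVu, if_neg hSV] at hb
    exact le_antisymm hb (B.nonneg α)

lemma capExt_congr {X : Type*} [TopologicalSpace X] {B x : Capacity X}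
    (h : ∀ α, IsClosed α → B.toFun α = x.toFun α) (V : Set X) :
    capExt B.toFun V = capExt x.toFun V := by
  unfold capExt
  congr 1
  ext y
  constructor
  · rintro ⟨K, hK, rfl⟩; exact ⟨K, hK, (h K hK.1).symm⟩
  · rintro ⟨K, hK, rfl⟩; exact ⟨K, hK, h K hK.1⟩

lemma open_iff {X : Type*} [TopologicalSpace X] {x B : Capacity X}
    (h1 : ∀ α, IsClosed α → B.toFun α = x.toFun α) :
    ∀ s : Set (Capacity X), IsOpen s → (x ∈ s ↔ B ∈ s) := by
  have h2 : ∀ V, capExt B.toFun V = capExt x.toFun V := fun V => capExt_congr h1 V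
  intro s hs
  have hs' : TopologicalSpace.GenerateOpen
      ({S | ∃ (F : Set X) (a : ℝ), IsClosed F ∧ S = {c : Capacity X | c.toFun F < a}} ∪
       {S | ∃ (U : Set X) (a : ℝ), IsOpen U ∧ S = {c : Capacity X | a < capExt c.toFun U}}) s := hs
  clear hs
  induction hs' with
  | basic S hS =>
      rcases hS with ⟨F, a, hF, rfl⟩ | ⟨U, a, _, rfl⟩
      · simp only [mem_setOf_eq, h1 F hF]
      · simp only [mem_setOf_eq, h2 U]
  | univ => simp
  | inter u v _ _ ihu ihv => simp only [mem_inter_iff, ihu, ihv]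
  | sUnion S _ ih =>
      simp only [mem_sUnion]
      exact exists_congr fun t => and_congr_right fun ht => ih t ht

lemma exclude {x : Capacity (Capacity Bool)}
    (hx : ∀ B : Capacity (Capacity Bool),
       (∀ α, IsClosed α → x.toFun α ≤ B.toFun α) →
       (∀ V, IsOpen V → capExt B.toFun V ≤ capExt x.toFun V) →
       ∀ α, IsClosed α → B.toFun α = x.toFun α)
    {F : Set (Capacity (Capacity Bool))} (hF : IsClosed F) (hxF : x ∉ F) :
    ∃ U, IsOpen U ∧ F ⊆ U ∧ x ∉ U := by
  refine ⟨(closure {x})ᶜ, isClosed_closure.isOpen_compl, ?_,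
    fun h => h (subset_closure rfl)⟩
  intro B hBF
  simp only [mem_compl_iff]
  intro hBcl
  rw [mem_closure_iff] at hBcl
  have h1 : ∀ α, IsClosed α → x.toFun α ≤ B.toFun α := by
    intro α hα
    by_contra hlt
    push_neg at hlt
    obtain ⟨y, hyo, hyx⟩ := hBcl {c | c.toFun α < x.toFun α} (capOpen_lt hα (x.toFun α)) hlt
    rw [mem_singleton_iff] at hyx
    subst hyx
    simp only [mem_setOf_eq] at hyo
    exact lt_irrefl _ hyo
  have h2 : ∀ V, IsOpen V → capExt B.toFun V ≤ capExt x.toFun V := by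
    intro V hV
    by_contra hlt
    push_neg at hlt
    obtain ⟨y, hyo, hyx⟩ := hBcl {c | capExt x.toFun V < capExt c.toFun V}
      (capOpen_gt hV (capExt x.toFun V)) hlt
    rw [mem_singleton_iff] at hyx
    subst hyx
    simp only [mem_setOf_eq] at hyo
    exact lt_irrefl _ hyo
  have heq := hx B h1 h2
  exact ((open_iff heq Fᶜ hF.isOpen_compl).mp hxF) hBF

noncomputable def Lc : Capacity (Capacity (Capacity Bool)) where
  toFun Λ := (1/2) * (if A1c ∈ Λ then 1 else 0) + (1/2) * (if A2c ∈ Λ then 1 else 0)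
  nonneg Λ := by split_ifs <;> norm_num
  le_one Λ := by split_ifs <;> norm_num
  empty' := by simp
  univ' := by simp; norm_num
  mono A B _ _ hAB := by
    have m1 : A1c ∈ A → A1c ∈ B := fun h => hAB h
    have m2 : A2c ∈ A → A2c ∈ B := fun h => hAB h
    split_ifs <;> simp_all <;> norm_num
  usc F a _ hFa := by
    have h00 : (0:ℝ) ≤ (1/2) * (if A1c ∈ F then (1:ℝ) else 0) +
        (1/2) * (if A2c ∈ F then 1 else 0) := by split_ifs <;> norm_num
    have ha0 : 0 < a := lt_of_le_of_lt h00 hFa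
    rcases lt_or_ge 1 a with h | ha
    · exact ⟨Set.univ, isOpen_univ, subset_univ _,
        fun K _ _ => by split_ifs <;> linarith⟩
    rcases lt_or_ge (1/2 : ℝ) a with h2 | h2
    · have hne : A1c ∉ F ∨ A2c ∉ F := by
        by_contra hcon
        push_neg at hcon
        rw [if_pos hcon.1, if_pos hcon.2] at hFa
        linarith
      rcases hne with hne | hne
      · obtain ⟨U, hU, hFU, hxU⟩ := exclude indist1 (by assumption) hne
        refine ⟨U, hU, hFU, fun K _ hK => ?_⟩
        have : A1c ∉ K := fun h => hxU (hK h)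
        rw [if_neg this]; split_ifs <;> linarith
      · obtain ⟨U, hU, hFU, hxU⟩ := exclude indist2 (by assumption) hne
        refine ⟨U, hU, hFU, fun K _ hK => ?_⟩
        have : A2c ∉ K := fun h => hxU (hK h)
        rw [if_neg this]; split_ifs <;> linarith
    · have hne1 : A1c ∉ F := by
        intro hmem
        rw [if_pos hmem] at hFa
        split_ifs at hFa <;> linarith
      have hne2 : A2c ∉ F := by
        intro hmem
        rw [if_pos hmem] at hFa
        split_ifs at hFa <;> linarith
      obtain ⟨U1, hU1, hFU1, hxU1⟩ := exclude indist1 (by assumption) hne1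
      obtain ⟨U2, hU2, hFU2, hxU2⟩ := exclude indist2 (by assumption) hne2
      refine ⟨U1 ∩ U2, hU1.inter hU2, subset_inter hFU1 hFU2, fun K _ hK => ?_⟩
      have k1 : A1c ∉ K := fun h => hxU1 (hK h).1
      have k2 : A2c ∉ K := fun h => hxU2 (hK h).2
      rw [if_neg k1, if_neg k2]; linarith

lemma sSup_Ioc_eq {f : ℝ → ℝ} {v w : ℝ} (hw : w ∈ Set.Ioc (0:ℝ) 1) (hfw : f w = v)
    (hb : ∀ t ∈ Set.Ioc (0:ℝ) 1, f t ≤ v) : sSup (f '' Set.Ioc 0 1) = v := by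
  apply le_antisymm
  · refine csSup_le (Set.Nonempty.image f ⟨w, hw⟩) ?_
    rintro y ⟨t, ht, rfl⟩
    exact hb t ht
  · exact le_csSup ⟨v, by rintro y ⟨t, ht, rfl⟩; exact hb t ht⟩ ⟨w, hw, hfw⟩

lemma le_sSup_Ioc {f : ℝ → ℝ} {v w : ℝ} (hw : w ∈ Set.Ioc (0:ℝ) 1) (hvw : v ≤ f w)
    (hb : ∀ t ∈ Set.Ioc (0:ℝ) 1, f t ≤ 1) : v ≤ sSup (f '' Set.Ioc 0 1) :=
  hvw.trans (le_csSup ⟨1, by rintro y ⟨t, ht, rfl⟩; exact hb t ht⟩ ⟨w, hw, rfl⟩)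

lemma A1_at (t : ℝ) :
    A1c.toFun {c : Capacity Bool | t ≤ c.toFun {true}} = if t ≤ 1/2 then 1 else 0 := by
  show (if S1 ⊆ {c : Capacity Bool | t ≤ c.toFun {true}} then (1:ℝ) else 0) = _
  have : S1 ⊆ {c : Capacity Bool | t ≤ c.toFun {true}} ↔ t ≤ 1/2 := by
    constructor
    · intro hs
      have hmem : pcap (1/2) (by norm_num) (by norm_num) ∈ S1 := by
        simp [S1, pcap_true]
      have := hs hmem
      rwa [mem_setOf_eq, pcap_true] at this
    · intro h c hc
      exact le_trans h hc
  rw [this]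

lemma A2_at (t : ℝ) (ht : 0 < t) (ht1 : t ≤ 1) :
    A2c.toFun {c : Capacity Bool | t ≤ c.toFun {true}} = 1/2 := by
  show (if {c : Capacity Bool | t ≤ c.toFun {true}} = Set.univ then (1:ℝ)
    else if S2 ⊆ {c : Capacity Bool | t ≤ c.toFun {true}} then 1/2 else 0) = 1/2
  have h1 : {c : Capacity Bool | t ≤ c.toFun {true}} ≠ Set.univ := by
    intro hu
    have : pcap 0 le_rfl zero_le_one ∈ {c : Capacity Bool | t ≤ c.toFun {true}} :=
      hu ▸ mem_univ _
    rw [mem_setOf_eq, pcap_true] at this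
    linarith
  have h2 : S2 ⊆ {c : Capacity Bool | t ≤ c.toFun {true}} := fun c hc =>
    le_trans ht1 hc
  rw [if_neg h1, if_pos h2]

lemma muStarM_A1 : muStarM A1c {true} = 1/2 := by
  apply sSup_Ioc_eq (w := 1/2) ⟨by norm_num, by norm_num⟩
  · rw [A1_at]; norm_num
  · intro t ht
    rw [A1_at]
    split_ifs with h
    · linarith
    · norm_num

lemma muStarM_A2 : muStarM A2c {true} = 1/2 := by
  apply sSup_Ioc_eq (w := 1) ⟨by norm_num, le_rfl⟩
  · rw [A2_at 1 (by norm_num) le_rfl]; norm_num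
  · intro t ht
    rw [A2_at t ht.1 ht.2]
    linarith [ht.2]

lemma claim1 : (1/2:ℝ) ≤ sSup ((fun t =>
    Lc.toFun {B : Capacity (Capacity Bool) | t ≤ muStarM B {true}} * t)
      '' Set.Ioc (0:ℝ) 1) := by
  apply le_sSup_Ioc (w := 1/2) ⟨by norm_num, by norm_num⟩
  · have hA1 : A1c ∈ {B : Capacity (Capacity Bool) | (1/2:ℝ) ≤ muStarM B {true}} := by
      rw [mem_setOf_eq, muStarM_A1]
    have hA2 : A2c ∈ {B : Capacity (Capacity Bool) | (1/2:ℝ) ≤ muStarM B {true}} := by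
      rw [mem_setOf_eq, muStarM_A2]
    have hL : Lc.toFun {B : Capacity (Capacity Bool) | (1/2:ℝ) ≤ muStarM B {true}} = 1 := by
      show (1/2) * (if A1c ∈ _ then (1:ℝ) else 0) + (1/2) * (if A2c ∈ _ then 1 else 0) = 1
      rw [if_pos hA1, if_pos hA2]; norm_num
    rw [hL]; norm_num
  · intro t ht
    have l1 := Lc.le_one {B : Capacity (Capacity Bool) | t ≤ muStarM B {true}}
    have l0 := Lc.nonneg {B : Capacity (Capacity Bool) | t ≤ muStarM B {true}}
    nlinarith [ht.1.le, ht.2]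

lemma Lc_inner (t s : ℝ) :
    Lc.toFun {B : Capacity (Capacity Bool) |
        s ≤ B.toFun {c : Capacity Bool | t ≤ c.toFun {true}}} =
      (1/2) * (if s ≤ (if t ≤ 1/2 then (1:ℝ) else 0) then 1 else 0) +
      (1/2) * (if s ≤ A2c.toFun {c : Capacity Bool | t ≤ c.toFun {true}} then 1 else 0) := by
  show (1/2) * (if A1c ∈ _ then (1:ℝ) else 0) + (1/2) * (if A2c ∈ _ then 1 else 0) = _
  simp only [mem_setOf_eq, A1_at]

lemma inner_val (t : ℝ) (ht : t ∈ Set.Ioc (0:ℝ) 1) :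
    sSup ((fun s => Lc.toFun {B : Capacity (Capacity Bool) |
        s ≤ B.toFun {c : Capacity Bool | t ≤ c.toFun {true}}} * s) '' Set.Ioc (0:ℝ) 1) =
      if t ≤ 1/2 then 1/2 else 1/4 := by
  have hA2 := A2_at t ht.1 ht.2
  by_cases h : t ≤ 1/2
  · rw [if_pos h]
    apply sSup_Ioc_eq (w := 1/2) ⟨by norm_num, by norm_num⟩
    · rw [Lc_inner, hA2, if_pos h]
      norm_num
    · intro s hs
      rw [Lc_inner, hA2, if_pos h]
      split_ifs with h1 h2 <;> nlinarith [hs.1, hs.2]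
  · rw [if_neg h]
    apply sSup_Ioc_eq (w := 1/2) ⟨by norm_num, by norm_num⟩
    · rw [Lc_inner, hA2, if_neg h]
      norm_num
    · intro s hs
      rw [Lc_inner, hA2, if_neg h]
      have : ¬ s ≤ (0:ℝ) := not_le.mpr hs.1
      rw [if_neg this]
      split_ifs with h2 <;> nlinarith [hs.1, hs.2]

lemma claim2 : sSup ((fun t =>
    sSup ((fun s => Lc.toFun {B : Capacity (Capacity Bool) |
        s ≤ B.toFun {c : Capacity Bool | t ≤ c.toFun {true}}} * s)
      '' Set.Ioc (0:ℝ) 1) * t) '' Set.Ioc (0:ℝ) 1) = 1/4 := by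
  apply sSup_Ioc_eq (w := 1/2) ⟨by norm_num, by norm_num⟩
  · rw [inner_val (1/2) ⟨by norm_num, by norm_num⟩]
    norm_num
  · intro t ht
    rw [inner_val t ht]
    split_ifs with h <;> nlinarith [ht.1, ht.2]


/-- μ• fails associativity on the full capacity functor: on the two-point discrete
space Bool (with a = true) there is a third-order capacity built from the Dirac
capacities at A1 and A2 on which the two iterated multiplications disagree. -/
theorem stmt8 :
    ∃ (A1 A2 : Capacity (Capacity Bool)) (L : Capacity (Capacity (Capacity Bool))),
      (∀ α : Set (Capacity Bool), A1.toFun α =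
        if {c : Capacity Bool | (1:ℝ)/2 ≤ c.toFun {true}} ⊆ α then 1 else 0) ∧
      (∀ α : Set (Capacity Bool), A2.toFun α =
        if α = Set.univ then 1
        else if {c : Capacity Bool | (1:ℝ) ≤ c.toFun {true}} ⊆ α then 1/2 else 0) ∧
      (∀ Λ : Set (Capacity (Capacity Bool)), L.toFun Λ =
        (1/2) * (if A1 ∈ Λ then 1 else 0) + (1/2) * (if A2 ∈ Λ then 1 else 0)) ∧
      (1/2 : ℝ) ≤ sSup ((fun t =>
          L.toFun {B : Capacity (Capacity Bool) | t ≤ muStarM B {true}} * t)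
            '' Set.Ioc (0:ℝ) 1) ∧
      sSup ((fun t =>
          sSup ((fun s =>
              L.toFun {B : Capacity (Capacity Bool) |
                  s ≤ B.toFun {c : Capacity Bool | t ≤ c.toFun {true}}} * s)
            '' Set.Ioc (0:ℝ) 1) * t) '' Set.Ioc (0:ℝ) 1) = 1/4 :=
  ⟨A1c, A2c, Lc, fun α => rfl, fun α => rfl, fun Λ => rfl, claim1, claim2⟩
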